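/- arXiv:1609.04113 — 8 statements merged into one kernel-verified Lean document; each statement's English description precedes it below -/
import Mathlib

section
/- Every direct summand of a Rickart module is a Rickart module. -/
/-- `M` is a Rickart module: the kernel of every endomorphism is a direct summand. -/
def IsRickartModule (R M : Type*) [Ring R] [AddCommGroup M] [Module R M] : Prop :=
  ∀ φ : Module.End R M, ∃ C : Submodule R M, IsCompl (LinearMap.ker φ) C

/-- If `K` and `L` are complements in `M` and `K ≤ N`, then their pullbacks to `N`
are complements in `N`. -/
lemma isCompl_comap_of_isCompl_of_le
    {R M : Type*} [Ring R] [AddCommGroup M] [Module R M]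
    {N K L : Submodule R M} (hKL : IsCompl K L) (hK : K ≤ N) :
    IsCompl (K.comap N.subtype) (L.comap N.subtype) := by
  constructor
  · rw [disjoint_iff, eq_bot_iff]
    rintro x ⟨hxK, hxL⟩
    have : (x : M) ∈ K ⊓ L := ⟨hxK, hxL⟩
    rw [hKL.inf_eq_bot, Submodule.mem_bot] at this
    exact (Submodule.mem_bot R).2 (by exact_mod_cast this)
  · rw [codisjoint_iff, eq_top_iff]
    rintro ⟨x, hx⟩ -
    obtain ⟨k, l, hk, hl, hkl⟩ := Submodule.codisjoint_iff_exists_add_eq.mp hKL.codisjoint x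
    have hkN : k ∈ N := hK hk
    have hlN : l ∈ N := by
      have : l = x - k := by rw [← hkl]; abel
      rw [this]; exact N.sub_mem hx hkN
    rw [Submodule.mem_sup]
    exact ⟨⟨k, hkN⟩, hk, ⟨l, hlN⟩, hl, by ext; simp [hkl]⟩

theorem directSummand_of_rickart_is_rickart
    {R M : Type*} [Ring R] [AddCommGroup M] [Module R M]
    (hM : IsRickartModule R M)
    (N N' : Submodule R M) (h : IsCompl N N') :
    IsRickartModule R N := by
  intro φ
  set π : M →ₗ[R] N := N.linearProjOfIsCompl N' h with hπ
  set ψ : Module.End R M := N.subtype ∘ₗ (φ : N →ₗ[R] N) ∘ₗ π with hψ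
  obtain ⟨C, hC⟩ := hM ψ
  set K : Submodule R M := (LinearMap.ker φ).map N.subtype with hK
  have hKN : K ≤ N := by
    rintro x ⟨y, _, rfl⟩; exact y.2
  -- K and N' ⊔ C are complements in M
  have hKker : K ≤ LinearMap.ker ψ := by
    rintro x ⟨y, hy, rfl⟩
    have hpy : π (N.subtype y) = y := Submodule.linearProjOfIsCompl_apply_left h y
    have hy' : φ y = 0 := hy
    rw [LinearMap.mem_ker, hψ, LinearMap.comp_apply, LinearMap.comp_apply, hpy, hy']
    simp
  have hN'ker : N' ≤ LinearMap.ker ψ := by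
    intro x hx
    have hpx : π x = 0 := Submodule.projectionOnto_apply_of_mem_right h hx
    simp [hψ, hpx]
  have hcompl : IsCompl K (N' ⊔ C) := by
    constructor
    · rw [disjoint_iff, eq_bot_iff]
      intro x hx
      obtain ⟨hxK, hxNC⟩ := hx
      obtain ⟨n', hn', c, hc, hnc⟩ := Submodule.mem_sup.mp hxNC
      have hc0 : c ∈ LinearMap.ker ψ ⊓ C := by
        constructor
        · have : c = x - n' := by rw [← hnc]; abel
          rw [this]
          exact Submodule.sub_mem _ (hKker hxK) (hN'ker hn')
        · exact hc
      rw [hC.inf_eq_bot, Submodule.mem_bot] at hc0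
      have hxN' : x ∈ N ⊓ N' := ⟨hKN hxK, by rw [← hnc, hc0, add_zero]; exact hn'⟩
      rw [h.inf_eq_bot, Submodule.mem_bot] at hxN'
      simpa using hxN'
    · rw [codisjoint_iff, eq_top_iff]
      rintro x -
      have hx : x ∈ LinearMap.ker ψ ⊔ C := by rw [hC.sup_eq_top]; trivial
      obtain ⟨k, hk, c, hc, hkc⟩ := Submodule.mem_sup.mp hx
      -- k ∈ ker ψ means π k ∈ ker φ, and k - π k ∈ N'
      have hπk : (π k : M) ∈ K := by
        refine ⟨π k, ?_, rfl⟩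
        have hk0 : ψ k = 0 := hk
        rw [hψ, LinearMap.comp_apply, LinearMap.comp_apply, Submodule.subtype_apply] at hk0
        exact LinearMap.mem_ker.mpr (by exact_mod_cast hk0)
      have hkn' : k - (π k : M) ∈ N' := by
        have hdec := Submodule.projection_add_projection_eq_self h k
        have heq : k - (π k : M) = (N'.linearProjOfIsCompl N h.symm k : M) := by
          rw [hπ, sub_eq_iff_eq_add, add_comm]
          exact hdec.symm
        rw [heq]; exact Submodule.coe_mem _
      have : x = (π k : M) + ((k - (π k : M)) + c) := by rw [← hkc]; abel
      rw [Submodule.mem_sup]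
      exact ⟨(π k : M), hπk, (k - (π k : M)) + c,
        Submodule.mem_sup.mpr ⟨_, hkn', _, hc, rfl⟩, this.symm⟩
  have hfinal := isCompl_comap_of_isCompl_of_le hcompl hKN
  have hKeq : K.comap N.subtype = LinearMap.ker φ := by
    rw [hK, Submodule.comap_map_eq_of_injective N.injective_subtype]
  rw [hKeq] at hfinal
  exact ⟨_, hfinal⟩
end

section
/- Let M₁ and M₂ be Rickart R-modules such that (1) every submodule N of M₁ ⊕ M₂ decomposes as N = N₁ ⊕ N₂ with Nᵢ ≤ Mᵢ, and (2) for all i, j ∈ {1,2}, Mᵢ is relatively Rickart to Mⱼ (every homomorphism Mᵢ → Mⱼ has kernel a direct summand of Mᵢ). Then M₁ ⊕ M₂ is a Rickart module. -/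
/-- `M` is relatively Rickart to `N`: every homomorphism `M → N` has kernel a
direct summand of `M`. -/
def IsRelativelyRickart (R M N : Type*) [Ring R] [AddCommGroup M] [Module R M]
    [AddCommGroup N] [Module R N] : Prop :=
  ∀ φ : M →ₗ[R] N, ∃ C : Submodule R M, IsCompl (LinearMap.ker φ) C

/-- SIP-style lemma: if `A` is a direct summand of `M` and `M` is relatively Rickart
to `N`, then `A ⊓ ker g` is a direct summand of `M` for every `g : M →ₗ[R] N`. -/
lemma sip_aux {R M N : Type*} [Ring R] [AddCommGroup M] [Module R M]
    [AddCommGroup N] [Module R N]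
    (A C : Submodule R M) (hAC : IsCompl A C) (g : M →ₗ[R] N)
    (h : IsRelativelyRickart R M N) :
    ∃ D : Submodule R M, IsCompl (A ⊓ LinearMap.ker g) D := by
  set e : M →ₗ[R] M := A.subtype ∘ₗ A.projectionOnto C hAC with he
  have heA : ∀ a ∈ A, e a = a := by
    intro a ha
    simp only [he, LinearMap.comp_apply, Submodule.projectionOnto_apply_of_mem_left hAC ha,
      Submodule.subtype_apply]
  have heC : ∀ c ∈ C, e c = 0 := by
    intro c hc
    simp [he, Submodule.projectionOnto_apply_of_mem_right hAC hc]
  have hsub : ∀ x : M, x - e x ∈ C := by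
    intro x
    have : A.projectionOnto C hAC (x - e x) = 0 := by
      have : A.projectionOnto C hAC (e x) = A.projectionOnto C hAC x := by
        rw [he, LinearMap.comp_apply, Submodule.subtype_apply, Submodule.projectionOnto_apply_left hAC]
      simp [map_sub, this]
    have := (Submodule.linearProjOfIsCompl_apply_eq_zero_iff hAC).1 this
    exact this
  have heAmem : ∀ x : M, e x ∈ A := fun x => (A.projectionOnto C hAC x).2
  obtain ⟨D, hD⟩ := h (g ∘ₗ e)
  set K := LinearMap.ker (g ∘ₗ e) with hK
  refine ⟨C ⊔ D, ?_, ?_⟩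
  · -- disjointness
    rw [Submodule.disjoint_def]
    intro x hx hxCD
    obtain ⟨hxA, hxg⟩ := Submodule.mem_inf.1 hx
    obtain ⟨c, hc, d, hd, hcd⟩ := Submodule.mem_sup.1 hxCD
    have hxK : x ∈ K := by
      simp only [hK, LinearMap.mem_ker, LinearMap.comp_apply, heA x hxA]
      exact hxg
    have hcK : c ∈ K := by
      simp [hK, LinearMap.mem_ker, LinearMap.comp_apply, heC c hc]
    have hdK : d ∈ K := by
      have : d = x - c := by rw [← hcd]; abel
      rw [this]; exact K.sub_mem hxK hcK
    have hd0 : d = 0 := (Submodule.disjoint_def.1 hD.disjoint) d hdK hd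
    have hxc : x = c := by rw [← hcd, hd0, add_zero]
    have : x ∈ A ⊓ C := Submodule.mem_inf.2 ⟨hxA, hxc ▸ hc⟩
    simpa using (Submodule.disjoint_def.1 hAC.disjoint) x hxA (hxc ▸ hc)
  · -- codisjointness
    rw [codisjoint_iff]
    have hKle : K ≤ (A ⊓ LinearMap.ker g) ⊔ C := by
      intro x hx
      have hxg : g (e x) = 0 := hx
      have h1 : e x ∈ A ⊓ LinearMap.ker g := Submodule.mem_inf.2 ⟨heAmem x, hxg⟩
      have h2 : x - e x ∈ C := hsub x
      have : x = e x + (x - e x) := by abel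
      rw [this]
      exact Submodule.add_mem_sup h1 h2
    have htop : K ⊔ D = ⊤ := codisjoint_iff.1 hD.codisjoint
    rw [eq_top_iff, ← htop]
    calc K ⊔ D ≤ ((A ⊓ LinearMap.ker g) ⊔ C) ⊔ D := sup_le_sup_right hKle D
      _ = (A ⊓ LinearMap.ker g) ⊔ (C ⊔ D) := sup_assoc _ _ _

/-- `IsCompl` passes to products. -/
lemma isCompl_prod {R M₁ M₂ : Type*} [Ring R] [AddCommGroup M₁] [Module R M₁]
    [AddCommGroup M₂] [Module R M₂]
    {A₁ B₁ : Submodule R M₁} {A₂ B₂ : Submodule R M₂}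
    (h₁ : IsCompl A₁ B₁) (h₂ : IsCompl A₂ B₂) :
    IsCompl (A₁.prod A₂) (B₁.prod B₂) := by
  constructor
  · rw [Submodule.disjoint_def]
    rintro ⟨x, y⟩ ⟨hxA, hyA⟩ ⟨hxB, hyB⟩
    have hx : x = 0 := (Submodule.disjoint_def.1 h₁.disjoint) x hxA hxB
    have hy : y = 0 := (Submodule.disjoint_def.1 h₂.disjoint) y hyA hyB
    simp [hx, hy, Prod.ext_iff]
  · rw [codisjoint_iff, eq_top_iff]
    rintro ⟨x, y⟩ -
    have hx : x ∈ A₁ ⊔ B₁ := by rw [codisjoint_iff.1 h₁.codisjoint]; trivial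
    have hy : y ∈ A₂ ⊔ B₂ := by rw [codisjoint_iff.1 h₂.codisjoint]; trivial
    obtain ⟨a₁, ha₁, b₁, hb₁, hab₁⟩ := Submodule.mem_sup.1 hx
    obtain ⟨a₂, ha₂, b₂, hb₂, hab₂⟩ := Submodule.mem_sup.1 hy
    refine Submodule.mem_sup.2 ⟨(a₁, a₂), ⟨ha₁, ha₂⟩, (b₁, b₂), ⟨hb₁, hb₂⟩, ?_⟩
    simp [Prod.ext_iff, hab₁, hab₂]

theorem rickart_of_prod
    {R M₁ M₂ : Type*} [Ring R] [AddCommGroup M₁] [Module R M₁]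
    [AddCommGroup M₂] [Module R M₂]
    (h1 : IsRickartModule R M₁) (h2 : IsRickartModule R M₂)
    (hdecomp : ∀ N : Submodule R (M₁ × M₂),
      ∃ (N₁ : Submodule R M₁) (N₂ : Submodule R M₂), N = N₁.prod N₂)
    (h12 : IsRelativelyRickart R M₁ M₂) (h21 : IsRelativelyRickart R M₂ M₁) :
    IsRickartModule R (M₁ × M₂) := by
  intro φ
  -- component maps
  set ψ₁ : M₁ →ₗ[R] M₁ := LinearMap.fst R M₁ M₂ ∘ₗ (φ ∘ₗ LinearMap.inl R M₁ M₂) with hψ₁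
  set ψ₂ : M₁ →ₗ[R] M₂ := LinearMap.snd R M₁ M₂ ∘ₗ (φ ∘ₗ LinearMap.inl R M₁ M₂) with hψ₂
  set χ₁ : M₂ →ₗ[R] M₁ := LinearMap.fst R M₁ M₂ ∘ₗ (φ ∘ₗ LinearMap.inr R M₁ M₂) with hχ₁
  set χ₂ : M₂ →ₗ[R] M₂ := LinearMap.snd R M₁ M₂ ∘ₗ (φ ∘ₗ LinearMap.inr R M₁ M₂) with hχ₂
  set K₁ : Submodule R M₁ := LinearMap.ker ψ₁ ⊓ LinearMap.ker ψ₂ with hK₁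
  set K₂ : Submodule R M₂ := LinearMap.ker χ₁ ⊓ LinearMap.ker χ₂ with hK₂
  have hmem₁ : ∀ x : M₁, x ∈ K₁ ↔ φ (x, 0) = 0 := by
    intro x
    simp [hK₁, hψ₁, hψ₂, Submodule.mem_inf, LinearMap.mem_ker, Prod.ext_iff]
  have hmem₂ : ∀ y : M₂, y ∈ K₂ ↔ φ (0, y) = 0 := by
    intro y
    simp [hK₂, hχ₁, hχ₂, Submodule.mem_inf, LinearMap.mem_ker, Prod.ext_iff]
  -- the kernel of φ decomposes as K₁ × K₂
  obtain ⟨N₁, N₂, hN⟩ := hdecomp (LinearMap.ker φ)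
  have hker : LinearMap.ker φ = K₁.prod K₂ := by
    have hN₁ : N₁ = K₁ := by
      ext x
      constructor
      · intro hx
        have h0 : (0 : M₂) ∈ N₂ := N₂.zero_mem
        have : (x, (0 : M₂)) ∈ LinearMap.ker φ := by
          rw [hN]; exact ⟨hx, h0⟩
        exact (hmem₁ x).2 this
      · intro hx
        have : (x, (0 : M₂)) ∈ LinearMap.ker φ := (hmem₁ x).1 hx
        rw [hN] at this
        exact this.1
    have hN₂ : N₂ = K₂ := by
      ext y
      constructor
      · intro hy
        have h0 : (0 : M₁) ∈ N₁ := N₁.zero_mem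
        have : ((0 : M₁), y) ∈ LinearMap.ker φ := by
          rw [hN]; exact ⟨h0, hy⟩
        exact (hmem₂ y).2 this
      · intro hy
        have : ((0 : M₁), y) ∈ LinearMap.ker φ := (hmem₂ y).1 hy
        rw [hN] at this
        exact this.2
    rw [hN, hN₁, hN₂]
  -- K₁ is a direct summand of M₁
  obtain ⟨C₁, hC₁⟩ := h1 ψ₁
  obtain ⟨D₁, hD₁⟩ := sip_aux (LinearMap.ker ψ₁) C₁ hC₁ ψ₂ h12
  -- K₂ is a direct summand of M₂
  obtain ⟨C₂, hC₂⟩ := h2 χ₂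
  obtain ⟨D₂, hD₂⟩ := sip_aux (LinearMap.ker χ₂) C₂ hC₂ χ₁ h21
  have hK₂' : K₂ = LinearMap.ker χ₂ ⊓ LinearMap.ker χ₁ := by rw [hK₂, inf_comm]
  rw [hker]
  exact ⟨D₁.prod D₂, isCompl_prod hD₁ (hK₂' ▸ hD₂)⟩
end

section
/- Let M₁ and M₂ be Rickart R-modules such that (1) Ann_R(M₁) + Ann_R(M₂) = R, and (2) Mᵢ and Mⱼ are relatively Rickart for all i, j ∈ {1,2}. Then M₁ ⊕ M₂ is a Rickart module. -/
/-- If the annihilators of `M` and `N` are comaximal, every linear map `M → N` is zero. -/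
lemma hom_eq_zero_of_comaximal_ann {R M N : Type*} [Ring R] [AddCommGroup M] [Module R M]
    [AddCommGroup N] [Module R N]
    (hann : Module.annihilator R M ⊔ Module.annihilator R N = ⊤)
    (f : M →ₗ[R] N) : f = 0 := by
  have h1 : (1 : R) ∈ Module.annihilator R M ⊔ Module.annihilator R N := by
    rw [hann]; trivial
  obtain ⟨a, ha, b, hb, hab⟩ := Submodule.mem_sup.mp h1
  ext x
  have hax : a • x = 0 := Module.mem_annihilator.mp ha x
  have : f x = f ((a + b) • x) := by rw [hab, one_smul]
  rw [add_smul, hax, zero_add, map_smul, Module.mem_annihilator.mp hb (f x)] at this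
  simpa using this

theorem rickart_of_prod_of_comaximal_annihilators
    {R M₁ M₂ : Type*} [Ring R] [AddCommGroup M₁] [Module R M₁]
    [AddCommGroup M₂] [Module R M₂]
    (h1 : IsRickartModule R M₁) (h2 : IsRickartModule R M₂)
    (hann : Module.annihilator R M₁ ⊔ Module.annihilator R M₂ = ⊤)
    (h12 : IsRelativelyRickart R M₁ M₂) (h21 : IsRelativelyRickart R M₂ M₁) :
    IsRickartModule R (M₁ × M₂) := by
  intro φ
  -- decompose φ into its four components
  set φ₁ : M₁ →ₗ[R] M₁ := (LinearMap.fst R M₁ M₂) ∘ₗ φ ∘ₗ (LinearMap.inl R M₁ M₂) with hφ₁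
  set φ₂ : M₂ →ₗ[R] M₂ := (LinearMap.snd R M₁ M₂) ∘ₗ φ ∘ₗ (LinearMap.inr R M₁ M₂) with hφ₂
  have hc12 : ((LinearMap.snd R M₁ M₂) ∘ₗ φ ∘ₗ (LinearMap.inl R M₁ M₂)) = 0 :=
    hom_eq_zero_of_comaximal_ann hann _
  have hc21 : ((LinearMap.fst R M₁ M₂) ∘ₗ φ ∘ₗ (LinearMap.inr R M₁ M₂)) = 0 :=
    hom_eq_zero_of_comaximal_ann (by rwa [sup_comm]) _
  have hφ : ∀ x : M₁ × M₂, φ x = (φ₁ x.1, φ₂ x.2) := by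
    intro ⟨x, y⟩
    have : (x, y) = ((x, 0) : M₁ × M₂) + (0, y) := by simp
    rw [this, map_add]
    have e1 : φ (x, 0) = (φ₁ x, 0) := by
      have := congrFun (congrArg DFunLike.coe hc12) x
      simp only [LinearMap.comp_apply, LinearMap.inl_apply, LinearMap.snd_apply,
        LinearMap.zero_apply] at this
      ext
      · simp [hφ₁]
      · simpa using this
    have e2 : φ (0, y) = (0, φ₂ y) := by
      have := congrFun (congrArg DFunLike.coe hc21) y
      simp only [LinearMap.comp_apply, LinearMap.inr_apply, LinearMap.fst_apply,
        LinearMap.zero_apply] at this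
      ext
      · simpa using this
      · simp [hφ₂]
    rw [e1, e2]
    simp
  have hker : LinearMap.ker φ = (LinearMap.ker φ₁).prod (LinearMap.ker φ₂) := by
    ext ⟨x, y⟩
    simp [LinearMap.mem_ker, hφ, Submodule.mem_prod, Prod.ext_iff]
  obtain ⟨C₁, hC₁⟩ := h1 φ₁
  obtain ⟨C₂, hC₂⟩ := h2 φ₂
  refine ⟨C₁.prod C₂, ?_, ?_⟩
  · rw [disjoint_iff, hker, Submodule.prod_inf_prod, disjoint_iff.mp hC₁.disjoint,
      disjoint_iff.mp hC₂.disjoint, Submodule.prod_bot]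
  · rw [codisjoint_iff, hker, Submodule.prod_sup_prod, codisjoint_iff.mp hC₁.codisjoint,
      codisjoint_iff.mp hC₂.codisjoint, Submodule.prod_top]
end

section
/- If M is a Rickart R-module then its endomorphism ring S = End_R(M) is a right Rickart ring, i.e., for every φ ∈ S the right annihilator r_S(φ) = {ψ ∈ S : φψ = 0} equals eS for some idempotent e ∈ S. -/
theorem endRing_rightRickart_of_rickart
    {R M : Type*} [Ring R] [AddCommGroup M] [Module R M]
    (hM : IsRickartModule R M) :
    ∀ φ : Module.End R M, ∃ e : Module.End R M, IsIdempotentElem e ∧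
      ∀ ψ : Module.End R M, φ * ψ = 0 ↔ ∃ s : Module.End R M, ψ = e * s := by
  intro φ
  obtain ⟨C, hC⟩ := hM φ
  set K := LinearMap.ker φ
  let p := K.linearProjOfIsCompl C hC
  refine ⟨K.subtype ∘ₗ p, ?_, ?_⟩
  · show (K.subtype ∘ₗ p) * (K.subtype ∘ₗ p) = K.subtype ∘ₗ p
    ext x
    exact congrArg K.subtype (Submodule.linearProjOfIsCompl_apply_left hC (p x))
  · intro ψ
    constructor
    · intro h
      refine ⟨ψ, ?_⟩
      ext x
      have hx : ψ x ∈ K := by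
        simpa [K, LinearMap.mem_ker] using congrFun (congrArg DFunLike.coe h) x
      show ψ x = K.subtype (p (ψ x))
      conv_lhs => rw [show ψ x = K.subtype ⟨ψ x, hx⟩ from rfl]
      exact (congrArg K.subtype (Submodule.linearProjOfIsCompl_apply_left hC ⟨ψ x, hx⟩)).symm
      
    · rintro ⟨s, rfl⟩
      ext x
      have : (K.subtype (p (s x))) ∈ K := (p (s x)).2
      simp only [K, LinearMap.mem_ker] at this; exact this
end

section
/- Let M be an R-module whose endomorphism ring S = End_R(M) is von Neumann regular. Then M is a Rickart module. -/
theorem rickart_of_regular_endRing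
    {R M : Type*} [Ring R] [AddCommGroup M] [Module R M]
    (hreg : ∀ φ : Module.End R M, ∃ ψ : Module.End R M, φ * ψ * φ = φ) :
    IsRickartModule R M := by
  intro φ
  obtain ⟨ψ, hψ⟩ := hreg φ
  set e : Module.End R M := ψ * φ with he
  -- ker φ = ker e
  have hker : LinearMap.ker φ = LinearMap.ker e := by
    apply le_antisymm
    · intro x hx
      simp only [LinearMap.mem_ker] at hx ⊢
      simp [he, Module.End.mul_apply, hx]
    · intro x hx
      simp only [LinearMap.mem_ker] at hx ⊢
      have : φ (e x) = φ x := by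
        have := congrArg (fun f : Module.End R M => f x) hψ
        simpa [Module.End.mul_apply, he] using this
      rw [hx] at this
      simpa using this.symm
  -- e is a projection onto its range, giving IsCompl (range e) (ker e)
  set p := LinearMap.range e
  have hid : ∀ x : p, e x = x := by
    rintro ⟨x, y, rfl⟩
    show e (e y) = e y
    have : φ (ψ (φ y)) = φ y := by
      have := congrArg (fun f : Module.End R M => f y) hψ
      simpa [Module.End.mul_apply] using this
    simp [he, Module.End.mul_apply, this]
  have hcompl : IsCompl p (LinearMap.ker (e.codRestrict p (fun x => LinearMap.mem_range_self e x))) :=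
    LinearMap.isCompl_of_proj (f := e.codRestrict p (fun x => LinearMap.mem_range_self e x))
      (by intro x; ext; simpa using hid x)
  have hker2 : LinearMap.ker (e.codRestrict p (fun x => LinearMap.mem_range_self e x)) =
      LinearMap.ker e := LinearMap.ker_codRestrict _ _ _
  rw [hker2] at hcompl
  exact ⟨p, hker ▸ hcompl.symm⟩
end

section
/- Let M be a Rickart R-module that is a self-cogenerator (for every endomorphism φ, the image of φ is a direct summand of M via the self-cogenerator property). Then S = End_R(M) is a von Neumann regular ring. -/
theorem regular_endRing_of_rickart_selfCogenerator
    {R M : Type*} [Ring R] [AddCommGroup M] [Module R M]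
    (hM : IsRickartModule R M)
    (hcog : ∀ φ : Module.End R M, ∃ C : Submodule R M, IsCompl (LinearMap.range φ) C) :
    ∀ φ : Module.End R M, ∃ ψ : Module.End R M, φ * ψ * φ = φ := by
  intro φ
  obtain ⟨C, hC⟩ := hM φ
  obtain ⟨D, hD⟩ := hcog φ
  -- φ restricted to C, corestricted to its range
  let f : C →ₗ[R] LinearMap.range φ :=
    LinearMap.codRestrict (LinearMap.range φ) (φ ∘ₗ C.subtype) (fun c => ⟨c, rfl⟩)
  have hfval : ∀ c : C, (f c : M) = φ c := fun c => rfl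
  have hinj : Function.Injective f := by
    intro c1 c2 h
    have h' : φ ((c1 : M) - c2) = 0 := by
      have := congrArg (Subtype.val) h
      simp only [hfval] at this
      simp [map_sub, this]
    have hker : (c1 : M) - c2 ∈ LinearMap.ker φ := h'
    have hCmem : (c1 : M) - c2 ∈ C := sub_mem c1.2 c2.2
    have : (c1 : M) - c2 = 0 :=
      (Submodule.disjoint_def.mp hC.disjoint) _ hker hCmem
    exact Subtype.ext (sub_eq_zero.mp this)
  have hsurj : Function.Surjective f := by
    rintro ⟨y, x, hx⟩
    refine ⟨C.linearProjOfIsCompl (LinearMap.ker φ) hC.symm x, ?_⟩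
    apply Subtype.ext
    rw [hfval]
    have hsum : ((LinearMap.ker φ).linearProjOfIsCompl C hC x : M)
        + (C.linearProjOfIsCompl (LinearMap.ker φ) hC.symm x : M) = x :=
      Submodule.projection_add_projection_eq_self hC x
    have hk : φ ((LinearMap.ker φ).linearProjOfIsCompl C hC x : M) = 0 :=
      ((LinearMap.ker φ).linearProjOfIsCompl C hC x).2
    calc φ (C.linearProjOfIsCompl (LinearMap.ker φ) hC.symm x : M)
        = φ (((LinearMap.ker φ).linearProjOfIsCompl C hC x : M)
            + (C.linearProjOfIsCompl (LinearMap.ker φ) hC.symm x : M)) := by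
          rw [map_add, hk, zero_add]
      _ = φ x := by rw [hsum]
      _ = y := hx
  let g : C ≃ₗ[R] LinearMap.range φ := LinearEquiv.ofBijective f ⟨hinj, hsurj⟩
  let ψ : Module.End R M :=
    C.subtype ∘ₗ (g.symm : LinearMap.range φ →ₗ[R] C) ∘ₗ
      (LinearMap.range φ).linearProjOfIsCompl D hD
  refine ⟨ψ, ?_⟩
  ext x
  show φ (ψ (φ x)) = φ x
  have hx : φ x ∈ LinearMap.range φ := ⟨x, rfl⟩
  have h1 : (LinearMap.range φ).linearProjOfIsCompl D hD (φ x) = ⟨φ x, hx⟩ :=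
    Submodule.linearProjOfIsCompl_apply_left hD ⟨φ x, hx⟩
  have h2 : φ ((g.symm ⟨φ x, hx⟩ : C) : M) = φ x := by
    have := g.apply_symm_apply ⟨φ x, hx⟩
    have := congrArg Subtype.val this
    rwa [show ((g (g.symm ⟨φ x, hx⟩) : LinearMap.range φ) : M)
        = φ ((g.symm ⟨φ x, hx⟩ : C) : M) from rfl] at this
  show φ ((g.symm ((LinearMap.range φ).linearProjOfIsCompl D hD (φ x)) : C) : M) = φ x
  rw [h1, h2]
end

section
/- Let M be a quasi-injective R-module with endomorphism ring S. If M is a Rickart module, then S is von Neumann regular. -/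
/-- `M` is quasi-injective: every homomorphism from a submodule of `M` to `M`
extends to an endomorphism of `M`. -/
def IsQuasiInjective (R M : Type*) [Ring R] [AddCommGroup M] [Module R M] : Prop :=
  ∀ (N : Submodule R M) (f : N →ₗ[R] M), ∃ g : Module.End R M, ∀ n : N, g n = f n

theorem regular_endRing_of_quasiInjective_rickart
    {R M : Type*} [Ring R] [AddCommGroup M] [Module R M]
    (hqi : IsQuasiInjective R M) (hM : IsRickartModule R M) :
    ∀ φ : Module.End R M, ∃ ψ : Module.End R M, φ * ψ * φ = φ := by
  intro φ
  obtain ⟨C, hC⟩ := hM φ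
  set e : C →ₗ[R] M := φ.comp C.subtype with he
  have hinj : Function.Injective e := by
    rw [← LinearMap.ker_eq_bot, Submodule.eq_bot_iff]
    rintro ⟨x, hx⟩ hxe
    have hx0 : x ∈ LinearMap.ker φ ⊓ C := ⟨hxe, hx⟩
    rw [hC.inf_eq_bot] at hx0
    exact Subtype.ext hx0
  set eq := LinearEquiv.ofInjective e hinj
  obtain ⟨ψ, hψ⟩ := hqi (LinearMap.range e) (C.subtype.comp eq.symm.toLinearMap)
  refine ⟨ψ, ?_⟩
  ext m
  have hm : m ∈ LinearMap.ker φ ⊔ C := hC.sup_eq_top ▸ Submodule.mem_top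
  obtain ⟨k, hk, c, hc, rfl⟩ := Submodule.mem_sup.mp hm
  have hφ : φ (k + c) = e ⟨c, hc⟩ := by
    simp [he, LinearMap.mem_ker.mp hk]
  have hmem : e ⟨c, hc⟩ ∈ LinearMap.range e := ⟨⟨c, hc⟩, rfl⟩
  have hψc : ψ (e ⟨c, hc⟩) = c := by
    have := hψ ⟨e ⟨c, hc⟩, hmem⟩
    simp only [LinearMap.coe_comp, Function.comp_apply, Submodule.coe_subtype] at this
    rw [this]
    have h2 : eq.symm ⟨e ⟨c, hc⟩, hmem⟩ = ⟨c, hc⟩ := by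
      apply eq.injective
      rw [eq.apply_symm_apply]
      exact Subtype.ext (LinearEquiv.ofInjective_apply e ⟨c, hc⟩).symm
    exact congrArg Subtype.val h2
  simp only [Module.End.mul_apply, LinearMap.coe_mk]
  rw [hφ, hψc]
  simp [he]
end

section
/- Let M be a right R-module such that S = End_R(M) has no infinite set of nonzero orthogonal idempotents. Then M is a Baer module if and only if M is a Rickart module. -/
/-- `M` is a Baer module: for every left ideal `I` of `End R M`, the common
kernel `r_M(I) = ⋂_{φ ∈ I} ker φ` is a direct summand of `M`. -/
def IsBaerModule (R M : Type*) [Ring R] [AddCommGroup M] [Module R M] : Prop :=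
  ∀ I : Ideal (Module.End R M),
    ∃ C : Submodule R M, IsCompl (⨅ φ ∈ I, LinearMap.ker φ) C

namespace BaerRickartAux

open LinearMap Submodule

variable {R M : Type*} [Ring R] [AddCommGroup M] [Module R M]

/-- Projection onto `p` along `q`, as an endomorphism. -/
noncomputable def projEnd (p q : Submodule R M) (h : IsCompl p q) : Module.End R M :=
  p.subtype ∘ₗ p.projectionOnto q h

lemma projEnd_apply_mem (p q : Submodule R M) (h : IsCompl p q) (x : M) :
    projEnd p q h x ∈ p := by
  simp [projEnd]

lemma projEnd_apply_left (p q : Submodule R M) (h : IsCompl p q) {x : M} (hx : x ∈ p) :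
    projEnd p q h x = x := by
  have := Submodule.projectionOnto_apply_left h ⟨x, hx⟩
  simpa [projEnd] using congrArg Subtype.val this

lemma projEnd_idem (p q : Submodule R M) (h : IsCompl p q) :
    IsIdempotentElem (projEnd p q h) := by
  apply LinearMap.ext
  intro x
  rw [Module.End.mul_apply]
  exact projEnd_apply_left p q h (projEnd_apply_mem p q h x)

lemma projEnd_range (p q : Submodule R M) (h : IsCompl p q) :
    LinearMap.range (projEnd p q h) = p := by
  rw [projEnd, LinearMap.range_comp, Submodule.range_projectionOnto,
    Submodule.map_subtype_top]

lemma projEnd_ker (p q : Submodule R M) (h : IsCompl p q) :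
    LinearMap.ker (projEnd p q h) = q := by
  ext x
  rw [LinearMap.mem_ker]
  show (↑(p.projectionOnto q h x) : M) = 0 ↔ x ∈ q
  rw [ZeroMemClass.coe_eq_zero, Submodule.projectionOnto_apply_eq_zero_iff]

lemma idem_apply_mem_range {e : Module.End R M} (he : IsIdempotentElem e) {x : M}
    (hx : x ∈ LinearMap.range e) : e x = x := by
  obtain ⟨y, rfl⟩ := hx
  rw [← Module.End.mul_apply, he]

lemma isCompl_range_ker {e : Module.End R M} (he : IsIdempotentElem e) :
    IsCompl (LinearMap.range e) (LinearMap.ker e) := by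
  constructor
  · rw [disjoint_iff, eq_bot_iff]
    rintro x ⟨hx1, hx2⟩
    have h1 := idem_apply_mem_range he hx1
    rw [Submodule.mem_bot, ← h1, LinearMap.mem_ker.1 hx2]
  · rw [codisjoint_iff, eq_top_iff]
    intro x _
    have h1 : e x ∈ LinearMap.range e := LinearMap.mem_range_self e x
    have h2 : x - e x ∈ LinearMap.ker e := by
      rw [LinearMap.mem_ker, map_sub, ← Module.End.mul_apply, he, sub_self]
    have : x = e x + (x - e x) := by abel
    rw [this]
    exact Submodule.add_mem_sup h1 h2

/-- The key Rickart step: the intersection of a direct summand with a kernel is a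
direct summand. -/
lemma rickart_inf_ker (hR : IsRickartModule R M) {N : Submodule R M}
    (hN : ∃ C, IsCompl N C) (ψ : Module.End R M) :
    ∃ C, IsCompl (N ⊓ LinearMap.ker ψ) C := by
  obtain ⟨Cn, hCn⟩ := hN
  set e : Module.End R M := projEnd N Cn hCn with he_def
  have he : IsIdempotentElem e := projEnd_idem N Cn hCn
  obtain ⟨C', hC'⟩ := hR (ψ * e)
  set K := LinearMap.ker (ψ * e) with hK_def
  have happ : ∀ {x : M}, x ∈ N → e x = x := fun hx => projEnd_apply_left N Cn hCn hx
  have hmem : ∀ x : M, e x ∈ N := projEnd_apply_mem N Cn hCn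
  have hkerK : ∀ {x : M}, x ∈ K ↔ ψ (e x) = 0 := fun {x} => by
    show x ∈ LinearMap.ker (ψ * e) ↔ _
    rw [LinearMap.mem_ker, Module.End.mul_apply]
  have hek : LinearMap.ker e ≤ K := fun x hx =>
    hkerK.2 (by rw [LinearMap.mem_ker.1 hx, map_zero])
  have hNK : N ⊓ LinearMap.ker ψ = N ⊓ K := by
    ext x
    simp only [Submodule.mem_inf]
    constructor
    · rintro ⟨h1, h2⟩
      exact ⟨h1, hkerK.2 (by rw [happ h1]; exact LinearMap.mem_ker.1 h2)⟩
    · rintro ⟨h1, h2⟩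
      refine ⟨h1, LinearMap.mem_ker.2 ?_⟩
      have := hkerK.1 h2
      rwa [happ h1] at this
  rw [hNK]
  refine ⟨LinearMap.ker e ⊔ C', ?_, ?_⟩
  · rw [disjoint_iff]
    have h1 : (LinearMap.ker e ⊔ C') ⊓ K = LinearMap.ker e := by
      rw [sup_inf_assoc_of_le _ hek]
      have : C' ⊓ K = ⊥ := by rw [inf_comm]; exact hC'.inf_eq_bot
      rw [this, sup_bot_eq]
    have h2 : (N ⊓ K) ⊓ (LinearMap.ker e ⊔ C') ≤ N ⊓ LinearMap.ker e := by
      calc (N ⊓ K) ⊓ (LinearMap.ker e ⊔ C')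
          ≤ N ⊓ (K ⊓ (LinearMap.ker e ⊔ C')) := by
            rw [inf_assoc]
        _ = N ⊓ LinearMap.ker e := by rw [inf_comm K, h1]
    have h3 : N ⊓ LinearMap.ker e = ⊥ := by
      rw [projEnd_ker]; exact hCn.inf_eq_bot
    exact le_bot_iff.mp (h3 ▸ h2)
  · rw [codisjoint_iff, eq_top_iff]
    have hKle : K ≤ (N ⊓ K) ⊔ LinearMap.ker e := by
      intro x hx
      have hx' : ψ (e x) = 0 := hkerK.1 hx
      have h1 : e x ∈ N ⊓ K := ⟨hmem x, hkerK.2 (by rw [happ (hmem x)]; exact hx')⟩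
      have h2 : x - e x ∈ LinearMap.ker e := by
        rw [LinearMap.mem_ker, map_sub, ← Module.End.mul_apply, he, sub_self]
      have : x = e x + (x - e x) := by abel
      rw [this]
      exact Submodule.add_mem_sup h1 h2
    calc (⊤ : Submodule R M) = K ⊔ C' := hC'.sup_eq_top.symm
      _ ≤ ((N ⊓ K) ⊔ LinearMap.ker e) ⊔ C' := sup_le_sup_right hKle C'
      _ = (N ⊓ K) ⊔ (LinearMap.ker e ⊔ C') := sup_assoc _ _ _

/-- In a Rickart module, finite intersections of kernels are direct summands. -/
lemma finsetInf_compl (hR : IsRickartModule R M) (A : Finset (Module.End R M)) :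
    ∃ C, IsCompl (⨅ φ ∈ A, LinearMap.ker φ) C := by
  classical
  induction A using Finset.induction_on with
  | empty => exact ⟨⊥, by simpa using isCompl_top_bot⟩
  | @insert a A ha ih =>
      rw [Finset.iInf_insert, inf_comm]
      exact rickart_inf_ker hR ih a

/-- Chain extension step: given a complemented `D' ≤ D` and an idempotent with range `D`,
there is an idempotent with range `D'` and larger kernel. -/
lemma chain_step {D D' : Submodule R M} (hDD : D' ≤ D) (hco : ∃ C, IsCompl D' C)
    {e : Module.End R M} (he : IsIdempotentElem e) (hre : LinearMap.range e = D) :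
    ∃ e' : Module.End R M, IsIdempotentElem e' ∧ LinearMap.range e' = D' ∧
      LinearMap.ker e ≤ LinearMap.ker e' := by
  obtain ⟨C, hC⟩ := hco
  have hK : IsCompl D (LinearMap.ker e) := hre ▸ isCompl_range_ker he
  have hcc : IsCompl D' ((C ⊓ D) ⊔ LinearMap.ker e) := by
    constructor
    · rw [disjoint_iff]
      have h1 : ((C ⊓ D) ⊔ LinearMap.ker e) ⊓ D = C ⊓ D := by
        rw [sup_inf_assoc_of_le _ (inf_le_right : C ⊓ D ≤ D)]
        have : LinearMap.ker e ⊓ D = ⊥ := by rw [inf_comm]; exact hK.inf_eq_bot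
        rw [this, sup_bot_eq]
      have h2 : D' ⊓ ((C ⊓ D) ⊔ LinearMap.ker e)
          ≤ D' ⊓ (((C ⊓ D) ⊔ LinearMap.ker e) ⊓ D) := by
        refine le_inf inf_le_left (le_inf inf_le_right (le_trans inf_le_left hDD))
      rw [h1] at h2
      have h3 : D' ⊓ (C ⊓ D) ≤ D' ⊓ C := inf_le_inf_left _ inf_le_left
      have h4 : D' ⊓ C = ⊥ := hC.inf_eq_bot
      exact le_bot_iff.mp (h4 ▸ le_trans h2 h3)
    · rw [codisjoint_iff]
      have h1 : D' ⊔ (C ⊓ D) = D := by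
        rw [← sup_inf_assoc_of_le _ hDD, hC.sup_eq_top, top_inf_eq]
      rw [← sup_assoc, h1, hK.sup_eq_top]
  refine ⟨projEnd D' _ hcc, projEnd_idem _ _ _, projEnd_range _ _ _, ?_⟩
  rw [projEnd_ker]
  exact le_sup_right

/-- A strictly decreasing chain of complemented submodules yields an infinite orthogonal
family of nonzero idempotents. -/
lemma exists_orth (D : ℕ → Submodule R M) (hlt : ∀ n, D (n + 1) < D n)
    (hco : ∀ n, ∃ C, IsCompl (D n) C) :
    ∃ f : ℕ → Module.End R M, (∀ n, IsIdempotentElem (f n)) ∧ (∀ n, f n ≠ 0) ∧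
      (∀ m n, m ≠ n → f m * f n = 0) := by
  have step : ∀ n (e : Module.End R M), IsIdempotentElem e → LinearMap.range e = D n →
      ∃ e', IsIdempotentElem e' ∧ LinearMap.range e' = D (n + 1) ∧
        LinearMap.ker e ≤ LinearMap.ker e' :=
    fun n e he hre => chain_step (hlt n).le (hco (n + 1)) he hre
  obtain ⟨C0, hC0⟩ := hco 0
  let T : ℕ → Type _ := fun n =>
    {e : Module.End R M // IsIdempotentElem e ∧ LinearMap.range e = D n}
  let base : T 0 := ⟨projEnd (D 0) C0 hC0, projEnd_idem _ _ _, projEnd_range _ _ _⟩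
  let st : ∀ n, T n → T (n + 1) := fun n p =>
    ⟨(step n p.1 p.2.1 p.2.2).choose, (step n p.1 p.2.1 p.2.2).choose_spec.1,
      (step n p.1 p.2.1 p.2.2).choose_spec.2.1⟩
  let E : ∀ n, T n := fun n => Nat.rec base st n
  have hE : ∀ n, E (n + 1) = st n (E n) := fun n => rfl
  set e : ℕ → Module.End R M := fun n => (E n).1 with he_def
  have hidem : ∀ n, IsIdempotentElem (e n) := fun n => (E n).2.1
  have hrange : ∀ n, LinearMap.range (e n) = D n := fun n => (E n).2.2
  have hker : ∀ n, LinearMap.ker (e n) ≤ LinearMap.ker (e (n + 1)) := fun n => by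
    have heq : e (n + 1) = (step n (E n).1 (E n).2.1 (E n).2.2).choose := rfl
    rw [heq]
    exact (step n (E n).1 (E n).2.1 (E n).2.2).choose_spec.2.2
  have hkmono : Monotone fun n => LinearMap.ker (e n) := monotone_nat_of_le_succ hker
  have hDanti : Antitone D := antitone_nat_of_succ_le fun n => (hlt n).le
  have hmul1 : ∀ m n, m ≤ n → e m * e n = e n := by
    intro m n hmn
    apply LinearMap.ext
    intro x
    rw [Module.End.mul_apply]
    apply idem_apply_mem_range (hidem m)
    rw [hrange m]
    exact hDanti hmn (hrange n ▸ LinearMap.mem_range_self _ x)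
  have hmul2 : ∀ m n, m ≤ n → e n * e m = e n := by
    intro m n hmn
    apply LinearMap.ext
    intro x
    rw [Module.End.mul_apply]
    have hk : x - e m x ∈ LinearMap.ker (e n) := by
      apply hkmono hmn
      rw [LinearMap.mem_ker, map_sub, ← Module.End.mul_apply, hidem m, sub_self]
    rw [LinearMap.mem_ker, map_sub, sub_eq_zero] at hk
    exact hk.symm
  refine ⟨fun n => e n - e (n + 1), ?_, ?_, ?_⟩
  · intro n
    have h1 : e n * e n = e n := hidem n
    have h2 : e (n + 1) * e (n + 1) = e (n + 1) := hidem (n + 1)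
    have h3 := hmul1 n (n + 1) (Nat.le_succ n)
    have h4 := hmul2 n (n + 1) (Nat.le_succ n)
    show (e n - e (n + 1)) * (e n - e (n + 1)) = e n - e (n + 1)
    rw [sub_mul, mul_sub, mul_sub, h1, h2, h3, h4]
    abel
  · intro n hzero
    have : e n = e (n + 1) := by rwa [sub_eq_zero] at hzero
    have hDeq : D n = D (n + 1) := by rw [← hrange n, ← hrange (n + 1), this]
    exact (hlt n).ne' hDeq
  · have key : ∀ m n, m < n → (e m - e (m + 1)) * (e n - e (n + 1)) = 0 ∧
        (e n - e (n + 1)) * (e m - e (m + 1)) = 0 := by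
      intro m n hmn
      have h1 : m ≤ n := hmn.le
      have h2 : m ≤ n + 1 := h1.trans (Nat.le_succ n)
      have h3 : m + 1 ≤ n := hmn
      have h4 : m + 1 ≤ n + 1 := h3.trans (Nat.le_succ n)
      constructor
      · rw [sub_mul, mul_sub, mul_sub, hmul1 m n h1, hmul1 m (n + 1) h2,
          hmul1 (m + 1) n h3, hmul1 (m + 1) (n + 1) h4]
        abel
      · rw [sub_mul, mul_sub, mul_sub, hmul2 m n h1, hmul2 (m + 1) n h3,
          hmul2 m (n + 1) h2, hmul2 (m + 1) (n + 1) h4]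
        abel
    intro m n hmn
    rcases lt_or_gt_of_ne hmn with hlt' | hlt'
    · exact (key m n hlt').1
    · exact (key n m hlt').2

end BaerRickartAux

theorem baer_iff_rickart_of_no_infinite_orthogonal_idempotents
    {R M : Type*} [Ring R] [AddCommGroup M] [Module R M]
    (h : ¬ ∃ f : ℕ → Module.End R M,
      (∀ n, IsIdempotentElem (f n)) ∧ (∀ n, f n ≠ 0) ∧
      (∀ m n, m ≠ n → f m * f n = 0)) :
    IsBaerModule R M ↔ IsRickartModule R M := by
  classical
  open BaerRickartAux in
  constructor
  · -- Baer → Rickart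
    intro hB φ
    obtain ⟨C, hC⟩ := hB (Ideal.span {φ})
    have hiff : (⨅ ψ ∈ Ideal.span {φ}, LinearMap.ker ψ) = LinearMap.ker φ := by
      apply le_antisymm
      · exact iInf₂_le φ (Ideal.subset_span (Set.mem_singleton φ))
      · refine le_iInf₂ fun ψ hψ => ?_
        obtain ⟨c, rfl⟩ := Submodule.mem_span_singleton.1 hψ
        intro x hx
        rw [LinearMap.mem_ker] at hx ⊢
        rw [smul_eq_mul, Module.End.mul_apply, hx, map_zero]
    exact ⟨C, hiff ▸ hC⟩
  · -- Rickart → Baer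
    intro hR I
    set T : Set (Submodule R M) :=
      {D | ∃ A : Finset (Module.End R M), ↑A ⊆ (I : Set (Module.End R M)) ∧
        D = ⨅ φ ∈ A, LinearMap.ker φ} with hT_def
    have hTtop : (⊤ : Submodule R M) ∈ T := ⟨∅, by simp, by simp⟩
    have hTco : ∀ D ∈ T, ∃ C, IsCompl D C := by
      rintro D ⟨A, _, rfl⟩
      exact finsetInf_compl hR A
    have hTmin : ∃ D ∈ T, ∀ D' ∈ T, ¬D' < D := by
      by_contra hc
      push_neg at hc
      let st : {D // D ∈ T} → {D // D ∈ T} := fun p =>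
        ⟨(hc p.1 p.2).choose, (hc p.1 p.2).choose_spec.1⟩
      let Ds : ℕ → {D // D ∈ T} := fun n => st^[n] ⟨⊤, hTtop⟩
      have hlt : ∀ n, (Ds (n + 1)).1 < (Ds n).1 := by
        intro n
        have hit : Ds (n + 1) = st (Ds n) := Function.iterate_succ_apply' st n _
        rw [hit]
        exact (hc (Ds n).1 (Ds n).2).choose_spec.2
      exact h (exists_orth (fun n => (Ds n).1) hlt fun n => hTco _ (Ds n).2)
    obtain ⟨D, hDT, hmin⟩ := hTmin
    obtain ⟨A, hAI, hDA⟩ := hDT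
    have hDI : D = ⨅ φ ∈ I, LinearMap.ker φ := by
      apply le_antisymm
      · refine le_iInf₂ fun φ hφ => ?_
        by_contra hnle
        have hmem : D ⊓ LinearMap.ker φ ∈ T := by
          refine ⟨insert φ A, ?_, ?_⟩
          · rw [Finset.coe_insert]
            exact Set.insert_subset hφ hAI
          · rw [Finset.iInf_insert, inf_comm, hDA]
        have hlt' : D ⊓ LinearMap.ker φ < D :=
          lt_of_le_of_ne inf_le_left fun heq => hnle (heq ▸ inf_le_right)
        exact hmin _ hmem hlt'
      · rw [hDA]
        exact le_iInf₂ fun φ hφ => iInf₂_le φ (hAI hφ)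
    obtain ⟨C, hC⟩ := hTco D ⟨A, hAI, hDA⟩
    exact ⟨C, hDI ▸ hC⟩
end
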